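/- For every assortment S ∈ 𝒮 there exists an assortment S′ ∈ Ŝ such that ρ_{i_1⋯i_M}(S) ≤ ρ_{i_1⋯i_M}(S′) for every tuple (i_1,…,i_M) ∈ L. -/
import Mathlib


namespace RobustAssortment

/-- `i` is the most preferred product of the assortment `S` under the ranking `σ`. -/
def isTop {n : ℕ} (σ : Equiv.Perm (Fin (n + 1))) (S : Finset (Fin (n + 1)))
    (i : Fin (n + 1)) : Prop :=
  i ∈ S ∧ ∀ j ∈ S, σ i ≤ σ j

instance {n : ℕ} (σ : Equiv.Perm (Fin (n + 1))) (S : Finset (Fin (n + 1)))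
    (i : Fin (n + 1)) : Decidable (isTop σ S i) := by
  unfold isTop; infer_instance
/-- The collection `Ŝ` of candidate assortments. -/
def Shat {n M : ℕ} (Sm : Fin M → Finset (Fin (n + 1))) (r : Fin (n + 1) → ℝ)
    (S : Finset (Fin (n + 1))) : Prop :=
  0 ∈ S ∧ ∀ i' ∈ S, ∀ i : Fin (n + 1), r i' < r i →
    (∀ m : Fin M, i' ∈ Sm m → i ∈ Sm m) → i ∈ S
/-- Membership in the set `L` of tuples of products compatible with a common ranking. -/
def memL {n M : ℕ} (Sm : Fin M → Finset (Fin (n + 1)))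
    (t : Fin M → Fin (n + 1)) : Prop :=
  ∃ σ : Equiv.Perm (Fin (n + 1)), ∀ m : Fin M, isTop σ (Sm m) (t m)

instance {n M : ℕ} (Sm : Fin M → Finset (Fin (n + 1))) (t : Fin M → Fin (n + 1)) :
    Decidable (memL Sm t) := by
  unfold memL; infer_instance
/-- The quantity `ρ_{i_1⋯i_M}(S)`: the minimum revenue among products of `S` that can be
the top of `S` under a ranking corresponding to the tuple `t`. -/
noncomputable def rho {n M : ℕ} (Sm : Fin M → Finset (Fin (n + 1)))
    (r : Fin (n + 1) → ℝ) (t : Fin M → Fin (n + 1)) (S : Finset (Fin (n + 1))) : ℝ :=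
  sInf {x | ∃ i ∈ S, (∃ σ : Equiv.Perm (Fin (n + 1)),
    (∀ m : Fin M, isTop σ (Sm m) (t m)) ∧ isTop σ S i) ∧ x = r i}

/-- From an injective `g : Fin N → ℕ` we can build a permutation whose order agrees
with that of `g`. -/
lemma exists_perm_of_inj {N : ℕ} (g : Fin N → ℕ) (hg : Function.Injective g) :
    ∃ σ : Equiv.Perm (Fin N), ∀ a b, σ a ≤ σ b ↔ g a ≤ g b := by
  classical
  set s : Finset ℕ := Finset.image g Finset.univ with hs
  have hcard : s.card = N := by
    rw [hs, Finset.card_image_of_injective _ hg, Finset.card_univ, Fintype.card_fin]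
  let e := s.orderIsoOfFin hcard
  have hmem : ∀ j, g j ∈ s := fun j => Finset.mem_image_of_mem g (Finset.mem_univ j)
  let f : Fin N → Fin N := fun j => e.symm ⟨g j, hmem j⟩
  have hf : Function.Injective f := by
    intro a b hab
    have := e.symm.injective hab
    exact hg (Subtype.mk_eq_mk.mp this)
  refine ⟨Equiv.ofBijective f (Finite.injective_iff_bijective.mp hf), fun a b => ?_⟩
  show f a ≤ f b ↔ _
  rw [e.symm.le_iff_le]
  exact Subtype.mk_le_mk

/-- Proposition 2 of the paper: every assortment can be exchanged for one in `Ŝ` with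
pointwise larger `ρ` values. -/
theorem statement2 (n M : ℕ) (hn : 1 ≤ n) (hM : 1 ≤ M)
    (r : Fin (n + 1) → ℝ) (hr0 : r 0 = 0) (hr : StrictMono r)
    (Sm : Fin M → Finset (Fin (n + 1))) (hSm0 : ∀ m, (0 : Fin (n + 1)) ∈ Sm m)
    (S : Finset (Fin (n + 1))) (hS : 0 ∈ S) :
    ∃ S' : Finset (Fin (n + 1)), Shat Sm r S' ∧
      ∀ t : Fin M → Fin (n + 1), memL Sm t → rho Sm r t S ≤ rho Sm r t S' := by
  classical
  set S' : Finset (Fin (n + 1)) := Finset.univ.filter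
    (fun i => ∃ i' ∈ S, r i' ≤ r i ∧ ∀ m : Fin M, i' ∈ Sm m → i ∈ Sm m) with hS'def
  have hmemS' : ∀ i, i ∈ S' ↔ ∃ i' ∈ S, r i' ≤ r i ∧ ∀ m, i' ∈ Sm m → i ∈ Sm m := by
    intro i; simp [hS'def]
  have hsub : S ⊆ S' := fun i hi => (hmemS' i).mpr ⟨i, hi, le_refl _, fun _ h => h⟩
  refine ⟨S', ⟨hsub hS, ?_⟩, ?_⟩
  · intro i' hi' i hlt hincl
    obtain ⟨i₀, hi₀S, hr0le, hincl0⟩ := (hmemS' i').mp hi'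
    exact (hmemS' i).mpr ⟨i₀, hi₀S, hr0le.trans hlt.le, fun m hm => hincl m (hincl0 m hm)⟩
  · intro t ht
    obtain ⟨σ, hσ⟩ := ht
    set A : Set ℝ := {x | ∃ i ∈ S, (∃ σ : Equiv.Perm (Fin (n + 1)),
      (∀ m : Fin M, isTop σ (Sm m) (t m)) ∧ isTop σ S i) ∧ x = r i} with hA
    set B : Set ℝ := {x | ∃ i ∈ S', (∃ σ : Equiv.Perm (Fin (n + 1)),
      (∀ m : Fin M, isTop σ (Sm m) (t m)) ∧ isTop σ S' i) ∧ x = r i} with hB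
    have hAbdd : BddBelow A := by
      have hrange : A ⊆ Set.range r := by
        rintro x ⟨i, _, _, hx⟩
        exact ⟨i, hx.symm⟩
      exact (Set.finite_range r).bddBelow.mono hrange
    have hBne : B.Nonempty := by
      obtain ⟨i₀, hi₀, hmin⟩ := S'.exists_min_image (fun j => σ j) ⟨0, hsub hS⟩
      exact ⟨r i₀, i₀, hi₀, ⟨σ, hσ, hi₀, hmin⟩, rfl⟩
    show sInf A ≤ sInf B
    apply le_csInf hBne
    rintro x ⟨i, hiS', ⟨τ, hτ, hiTop⟩, rfl⟩
    by_cases hiS : i ∈ S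
    · -- `i` itself is a top of `S` under `τ`
      have : r i ∈ A := ⟨i, hiS, ⟨τ, hτ, hiS, fun j hj => hiTop.2 j (hsub hj)⟩, rfl⟩
      exact csInf_le hAbdd this
    · -- use the witness `i'` and slide it just below `i`
      obtain ⟨i', hi'S, hri', hMincl⟩ := (hmemS' i).mp hiS'
      have hne : i' ≠ i := fun h => hiS (h ▸ hi'S)
      -- `τ i < τ j` for every `j ∈ S`
      have hlt : ∀ j ∈ S, (τ i : ℕ) < (τ j : ℕ) := by
        intro j hj
        have hle : τ i ≤ τ j := hiTop.2 j (hsub hj)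
        have hnej : i ≠ j := fun h => hiS (h ▸ hj)
        have : τ i ≠ τ j := fun h => hnej (τ.injective h)
        exact lt_of_le_of_ne (Fin.le_def.mp hle) (fun h => this (Fin.ext h))
      set g : Fin (n + 1) → ℕ :=
        fun j => if j = i' then 2 * (τ i : ℕ) + 1 else 2 * (τ j : ℕ) with hg
      have hginj : Function.Injective g := by
        intro a b hab
        simp only [hg] at hab
        by_cases ha : a = i' <;> by_cases hb : b = i'
        · exact ha.trans hb.symm
        · rw [if_pos ha, if_neg hb] at hab; omega
        · rw [if_neg ha, if_pos hb] at hab; omega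
        · rw [if_neg ha, if_neg hb] at hab
          exact τ.injective (Fin.ext (by omega))
      obtain ⟨σ₀, hσ₀⟩ := exists_perm_of_inj g hginj
      -- `t m ≠ i'` for each `m`
      have htmne : ∀ m, t m ≠ i' := by
        intro m heq
        have hi'Sm : i' ∈ Sm m := heq ▸ (hτ m).1
        have hiSm : i ∈ Sm m := hMincl m hi'Sm
        have h1 : τ (t m) ≤ τ i := (hτ m).2 i hiSm
        have h2 : τ i ≤ τ i' := hiTop.2 i' (hsub hi'S)
        rw [heq] at h1
        have : τ i' = τ i := le_antisymm h1 h2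
        exact hne (τ.injective this)
      -- `i'` is a top of `S` under `σ₀`
      have htopS : isTop σ₀ S i' := by
        refine ⟨hi'S, fun j hj => (hσ₀ i' j).mpr ?_⟩
        by_cases hji' : j = i'
        · subst hji'; exact le_refl _
        · simp only [hg, if_pos rfl, if_neg hji']
          have := hlt j hj
          omega
      -- tops of the `Sm m` are preserved
      have htops : ∀ m, isTop σ₀ (Sm m) (t m) := by
        intro m
        refine ⟨(hτ m).1, fun j hj => (hσ₀ (t m) j).mpr ?_⟩
        by_cases hji' : j = i'
        · have hiSm : i ∈ Sm m := hMincl m (hji' ▸ hj)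
          have h1 : (τ (t m) : ℕ) ≤ (τ i : ℕ) := Fin.le_def.mp ((hτ m).2 i hiSm)
          simp only [hg, if_neg (htmne m), if_pos hji']
          omega
        · have h1 : (τ (t m) : ℕ) ≤ (τ j : ℕ) := Fin.le_def.mp ((hτ m).2 j hj)
          simp only [hg, if_neg (htmne m), if_neg hji']
          omega
      have hmemA : r i' ∈ A := ⟨i', hi'S, ⟨σ₀, htops, htopS⟩, rfl⟩
      exact le_trans (csInf_le hAbdd hmemA) hri'

end RobustAssortment
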